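/- Let G be a finite group, H ≤ G a subgroup, σ an irreducible unitary representation of G, and suppose Res^G_H σ' = ρ_1 ⊕ ρ_2 ⊕ ⋯ ⊕ ρ_m with ρ_1,…,ρ_m pairwise inequivalent irreducible representations of H; set ρ = ρ_1. If ψ ∈ L(G) is a linear combination ψ = Σ_{i=1}^m c_i φ_{σ,ρ_i} (c_i ∈ ℂ) — i.e. ψ is H-conjugacy invariant and lies in the σ-isotypic component of L(G) — and ψ(h) = (1/d_ρ) χ^ρ(h) for all h ∈ H, then ψ = φ_{σ,ρ} (equivalently c_i = δ_{i,1}). -/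

import Mathlib

open FDRep CategoryTheory

open Module Polynomial
open scoped Classical

theorem mychar_conj {K : Type} [Group K] [Fintype K] (W : FDRep ℂ K) (g : K) :
    (starRingEnd ℂ) (W.character g) = W.character g⁻¹ := by
  classical
  set f : Module.End ℂ W := W.ρ g with hfdef
  set f' : Module.End ℂ W := W.ρ g⁻¹ with hf'def
  have hf'f : f' * f = 1 := by rw [hfdef, hf'def, ← map_mul, inv_mul_cancel, map_one]
  have hff' : f * f' = 1 := by rw [hfdef, hf'def, ← map_mul, mul_inv_cancel, map_one]
  have hcomm : Commute f f' := by unfold Commute SemiconjBy; rw [hff', hf'f]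
  have hn : (Fintype.card K) ≠ 0 := Fintype.card_ne_zero
  have hfn : f ^ (Fintype.card K) = 1 := by rw [hfdef, ← map_pow, pow_card_eq_one, map_one]
  have hsq : Squarefree ((X : Polynomial ℂ) ^ (Fintype.card K) - C 1) :=
    (Polynomial.separable_X_pow_sub_C 1 (Nat.cast_ne_zero.mpr hn) one_ne_zero).squarefree
  have hss : f.IsFinitelySemisimple := by
    refine (Module.End.isSemisimple_of_squarefree_aeval_eq_zero hsq ?_).isFinitelySemisimple
    rw [map_sub, map_pow, aeval_X, aeval_C]
    simp [hfn, Algebra.algebraMap_eq_smul_one]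
  have heig : ∀ μ : ℂ, f.maxGenEigenspace μ = f.eigenspace μ :=
    fun μ => hss.maxGenEigenspace_eq_eigenspace μ
  have hsup : ⨆ μ : ℂ, f.maxGenEigenspace μ = ⊤ := Module.End.iSup_maxGenEigenspace_eq_top f
  have hind : iSupIndep f.maxGenEigenspace := f.independent_maxGenEigenspace
  have hint : DirectSum.IsInternal (fun μ : ℂ => f.maxGenEigenspace μ) :=
    DirectSum.isInternal_submodule_of_iSupIndep_of_iSup_eq_top hind hsup
  have hfin : {μ : ℂ | f.maxGenEigenspace μ ≠ ⊥}.Finite :=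
    WellFoundedGT.finite_ne_bot_of_iSupIndep hind
  have hmf : ∀ μ : ℂ, Set.MapsTo f (f.maxGenEigenspace μ) (f.maxGenEigenspace μ) :=
    fun μ => f.mapsTo_maxGenEigenspace_of_comm rfl μ
  have hmf' : ∀ μ : ℂ, Set.MapsTo f' (f.maxGenEigenspace μ) (f.maxGenEigenspace μ) :=
    fun μ => f.mapsTo_maxGenEigenspace_of_comm hcomm μ
  show (starRingEnd ℂ) (LinearMap.trace ℂ W f) = LinearMap.trace ℂ W f'
  rw [LinearMap.trace_eq_sum_trace_restrict' hint hfin hmf,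
    LinearMap.trace_eq_sum_trace_restrict' hint hfin hmf', map_sum]
  refine Finset.sum_congr rfl fun μ hμ => ?_
  have hne : f.eigenspace μ ≠ ⊥ := by
    rw [← heig μ]; exact (Set.Finite.mem_toFinset hfin).mp hμ
  obtain ⟨x, hx, hx0⟩ := Submodule.ne_bot_iff _ |>.mp hne
  have hev : f.HasEigenvector μ x := ⟨hx, hx0⟩
  have hμn : μ ^ (Fintype.card K) = 1 := by
    have h1 : (f ^ (Fintype.card K)) x = μ ^ (Fintype.card K) • x :=
      Module.End.HasUnifEigenvector.pow_apply hev _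
    rw [hfn] at h1
    have h2 : (μ ^ (Fintype.card K) - 1) • x = 0 := by
      rw [sub_smul, one_smul, ← h1]; simp
    rcases smul_eq_zero.mp h2 with h | h
    · exact sub_eq_zero.mp h
    · exact absurd h hx0
  have hμ0 : μ ≠ 0 := by
    rintro rfl
    rw [zero_pow hn] at hμn
    exact zero_ne_one hμn
  have hnorm : ‖μ‖ = 1 := by
    have h3 : ‖μ‖ ^ (Fintype.card K) = 1 := by rw [← norm_pow, hμn, norm_one]
    rcases (pow_eq_one_iff_cases).mp h3 with h | h | h
    · exact absurd h hn
    · exact h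
    · exfalso; linarith [norm_nonneg μ, h.1]
  have hconj : (starRingEnd ℂ) μ = μ⁻¹ := (RCLike.inv_eq_conj hnorm).symm
  have hrf : f.restrict (hmf μ) = μ • LinearMap.id := by
    ext y
    have hy : (y : W) ∈ f.eigenspace μ := by rw [← heig μ]; exact y.2
    have h4 : f (y : W) = μ • (y : W) := Module.End.mem_eigenspace_iff.mp hy
    exact h4
  have hrf' : f'.restrict (hmf' μ) = μ⁻¹ • LinearMap.id := by
    ext y
    have hy : (y : W) ∈ f.eigenspace μ := by rw [← heig μ]; exact y.2
    have h4 : f (y : W) = μ • (y : W) := Module.End.mem_eigenspace_iff.mp hy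
    have h5 : f' (f (y : W)) = (y : W) := by
      rw [← Module.End.mul_apply, hf'f, Module.End.one_apply]
    rw [h4, map_smul] at h5
    have h6 : f' (y : W) = μ⁻¹ • (y : W) := by
      calc f' (y : W) = μ⁻¹ • (μ • f' (y : W)) := by
            rw [smul_smul, inv_mul_cancel₀ hμ0, one_smul]
        _ = μ⁻¹ • (y : W) := by rw [h5]
    exact h6
  have t1 : (LinearMap.trace ℂ _) (μ • (LinearMap.id : f.maxGenEigenspace μ →ₗ[ℂ] f.maxGenEigenspace μ))
      = μ * (finrank ℂ (f.maxGenEigenspace μ) : ℂ) := by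
    rw [LinearMap.map_smul, LinearMap.trace_id, smul_eq_mul]
  have t2 : (LinearMap.trace ℂ _) (μ⁻¹ • (LinearMap.id : f.maxGenEigenspace μ →ₗ[ℂ] f.maxGenEigenspace μ))
      = μ⁻¹ * (finrank ℂ (f.maxGenEigenspace μ) : ℂ) := by
    rw [LinearMap.map_smul, LinearMap.trace_id, smul_eq_mul]
  rw [hrf, hrf', t1, t2, map_mul, hconj, map_natCast]


theorem myfinrank_pos {K : Type} [Group K] [Fintype K] (X : FDRep ℂ K) [Simple X] :
    (finrank ℂ X : ℂ) ≠ 0 := by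
  have h : finrank ℂ X ≠ 0 := by
    intro h0
    have hs : Subsingleton X := finrank_zero_iff.mp h0
    apply CategoryTheory.id_nonzero X
    apply Action.hom_ext
    ext v
    exact @Subsingleton.elim _ hs _ _
  exact_mod_cast h

theorem mychar_orth {K : Type} [Group K] [Fintype K] [inv : Invertible (Fintype.card K : ℂ)]
    (X Y : FDRep ℂ K) [Simple X] [Simple Y] :
    ⅟ (Fintype.card K : ℂ) • ∑ g : K, X.character g * Y.character g⁻¹ =
      if Nonempty (X ≅ Y) then 1 else 0 := by
  haveI : Invertible (Nat.card K : ℂ) := by rw [Nat.card_eq_fintype_card]; exact inv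
  have h := char_orthonormal X Y
  simpa [Nat.card_eq_fintype_card, invOf_eq_inv, smul_eq_mul] using h

theorem myconv {K : Type} [Group K] [Fintype K] (X Y : FDRep ℂ K) [Simple X] [Simple Y] (g : K) :
    ∑ x : K, Y.character x⁻¹ * X.character (g * x) =
      (if Nonempty (X ≅ Y) then (Fintype.card K : ℂ) / (finrank ℂ X) else 0) * X.character g := by
  haveI : Invertible (Fintype.card K : ℂ) :=
    invertibleOfNonzero (Nat.cast_ne_zero.mpr Fintype.card_ne_zero)
  set T : Module.End ℂ X := ∑ x : K, Y.character x⁻¹ • (X.ρ x : Module.End ℂ X) with hTdef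
  have hT : ∀ k : K, X.ρ k * T = T * X.ρ k := by
    intro k
    rw [hTdef, Finset.mul_sum, Finset.sum_mul]
    have lhs : ∀ x : K, (X.ρ k : Module.End ℂ X) * (Y.character x⁻¹ • (X.ρ x : Module.End ℂ X))
        = Y.character x⁻¹ • (X.ρ (k * x) : Module.End ℂ X) := by
      intro x; rw [mul_smul_comm, ← map_mul]
    have rhs : ∀ x : K, (Y.character x⁻¹ • (X.ρ x : Module.End ℂ X)) * (X.ρ k : Module.End ℂ X)
        = Y.character x⁻¹ • (X.ρ (x * k) : Module.End ℂ X) := by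
      intro x; rw [smul_mul_assoc, ← map_mul]
    simp_rw [lhs, rhs]
    have h1 : ∑ x : K, Y.character x⁻¹ • (X.ρ (k * x) : Module.End ℂ X)
        = ∑ x : K, Y.character (x⁻¹ * k) • (X.ρ x : Module.End ℂ X) := by
      refine Fintype.sum_equiv (Equiv.mulLeft k) _ _ fun x => ?_
      simp [mul_inv_rev, mul_assoc]
    have h2 : ∑ x : K, Y.character x⁻¹ • (X.ρ (x * k) : Module.End ℂ X)
        = ∑ x : K, Y.character (k * x⁻¹) • (X.ρ x : Module.End ℂ X) := by
      refine Fintype.sum_equiv (Equiv.mulRight k) _ _ fun x => ?_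
      simp [mul_inv_rev, ← mul_assoc]
    rw [h1, h2]
    refine Finset.sum_congr rfl fun x _ => ?_
    rw [char_mul_comm]
  set Thom : X ⟶ X := Action.Hom.mk (FGModuleCat.ofHom T) (by
    intro k
    ext (v : X)
    show T ((X.ρ k) v) = (X.ρ k) (T v)
    have := congrArg (fun (S : Module.End ℂ X) => S v) (hT k)
    simpa using this.symm) with hThom
  obtain ⟨cc, hcc⟩ := CategoryTheory.endomorphism_simple_eq_smul_id ℂ Thom
  have hccT : T = cc • (1 : Module.End ℂ X) := by
    have := congrArg (fun φ => φ.hom.hom.hom) hcc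
    exact this.symm
  have tr1 : LinearMap.trace ℂ X T = cc * (finrank ℂ X : ℂ) := by
    rw [hccT, map_smul, LinearMap.trace_one, smul_eq_mul]
  have tr2 : LinearMap.trace ℂ X T = ∑ x : K, X.character x * Y.character x⁻¹ := by
    rw [hTdef, map_sum]
    refine Finset.sum_congr rfl fun x _ => ?_
    rw [map_smul, smul_eq_mul, mul_comm]
    rfl
  have t0 : cc * (finrank ℂ X : ℂ) =
      (Fintype.card K : ℂ) * (if Nonempty (X ≅ Y) then 1 else 0) := by
    have h := mychar_orth (K := K) X Y
    rw [invOf_smul_eq_iff] at h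
    rw [← tr1, tr2, h, smul_eq_mul]
  have e1 : (X.ρ g : Module.End ℂ X) * T = ∑ x : K, Y.character x⁻¹ • (X.ρ (g * x) : Module.End ℂ X) := by
    rw [hTdef, Finset.mul_sum]
    refine Finset.sum_congr rfl fun x _ => ?_
    rw [mul_smul_comm, ← map_mul]
  have e2 : (X.ρ g : Module.End ℂ X) * T = cc • (X.ρ g : Module.End ℂ X) := by
    rw [hccT, mul_smul_comm, mul_one]
  have t1 : ∑ x : K, Y.character x⁻¹ * X.character (g * x) = cc * X.character g := by
    have c1 : LinearMap.trace ℂ X ((X.ρ g : Module.End ℂ X) * T)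
        = ∑ x : K, Y.character x⁻¹ * X.character (g * x) := by
      rw [e1, map_sum]
      refine Finset.sum_congr rfl fun x _ => ?_
      rw [map_smul, smul_eq_mul]
      rfl
    have c2 : LinearMap.trace ℂ X ((X.ρ g : Module.End ℂ X) * T) = cc * X.character g := by
      rw [e2, map_smul, smul_eq_mul]
      rfl
    rw [← c1, c2]
  rw [t1]
  by_cases hiso : Nonempty (X ≅ Y)
  · simp only [hiso, if_true, mul_one] at t0 ⊢
    have : cc = (Fintype.card K : ℂ) / (finrank ℂ X : ℂ) := by
      rw [eq_div_iff (myfinrank_pos X)]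
      exact t0
    rw [this]
  · simp only [hiso, if_false, mul_zero] at t0 ⊢
    have : cc = 0 := by
      rcases mul_eq_zero.mp t0 with h | h
      · exact h
      · exact absurd h (myfinrank_pos X)
    rw [this, zero_mul]


/-- With `G`, `H`, `σ = V`, `ρ i` as in Statement 0 (in particular the character
of the restriction to `H` of the adjoint representation `σ'` equals `∑ i, χ^{ρ i}` with the `ρ i`
pairwise inequivalent irreducibles of `H`), if `ψ ∈ L(G)` is a linear combination
`ψ = ∑ i, c i • φ_{σ, ρ i}` of the generalized characters
`φ_{σ,ρ_i}(g) = (1/|H|) ∑_{x ∈ H} conj(χ^σ(g x)) conj(χ^{ρ i}(x))`,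
and `ψ(h) = (1/d_{ρ 0}) χ^{ρ 0}(h)` for all `h ∈ H`, then `ψ = φ_{σ, ρ 0}`. -/
theorem generalized_character_uniqueness
    {G : Type} [Group G] [Fintype G] (H : Subgroup G) [Fintype H]
    (V : FDRep ℂ G) [Simple V]
    (m : ℕ) (hm : 0 < m) (ρ : Fin m → FDRep ℂ H) [∀ i, Simple (ρ i)]
    (hpairwise : ∀ i j : Fin m, i ≠ j → IsEmpty (ρ i ≅ ρ j))
    (hres : ∀ h : H, V.character ((h : G)⁻¹) = ∑ i : Fin m, (ρ i).character h)
    (ψ : G → ℂ) (c : Fin m → ℂ)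
    (hψ : ∀ g : G, ψ g = ∑ i : Fin m, c i *
      ((Fintype.card H : ℂ)⁻¹ * ∑ x : H, (starRingEnd ℂ) (V.character (g * (x : G))) *
        (starRingEnd ℂ) ((ρ i).character x)))
    (hval : ∀ h : H, ψ (h : G) =
      (Module.finrank ℂ (ρ ⟨0, hm⟩) : ℂ)⁻¹ * (ρ ⟨0, hm⟩).character h) :
    ∀ g : G, ψ g =
      (Fintype.card H : ℂ)⁻¹ * ∑ x : H, (starRingEnd ℂ) (V.character (g * (x : G))) *
        (starRingEnd ℂ) ((ρ ⟨0, hm⟩).character x) := by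
  classical
  letI : Invertible (Fintype.card H : ℂ) :=
    invertibleOfNonzero (Nat.cast_ne_zero.mpr Fintype.card_ne_zero)
  set i0 : Fin m := ⟨0, hm⟩ with hi0
  have hcard : (Fintype.card H : ℂ) ≠ 0 := Nat.cast_ne_zero.mpr Fintype.card_ne_zero
  -- Step A: pointwise value of each generalized character on H
  have φval : ∀ (i : Fin m) (h : H),
      (Fintype.card H : ℂ)⁻¹ * ∑ x : H, (starRingEnd ℂ) (V.character ((h : G) * (x : G))) *
        (starRingEnd ℂ) ((ρ i).character x)
      = (finrank ℂ (ρ i) : ℂ)⁻¹ * (ρ i).character h := by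
    intro i h
    have inner : ∀ x : H, (starRingEnd ℂ) (V.character ((h : G) * (x : G))) *
        (starRingEnd ℂ) ((ρ i).character x)
        = ∑ j : Fin m, (ρ i).character x⁻¹ * (ρ j).character (h * x) := by
      intro x
      have hVx : V.character ((h : G) * (x : G)) = ∑ j : Fin m, (ρ j).character ((h * x)⁻¹) := by
        have h1 := hres (h * x)⁻¹
        have h2 : (((h * x)⁻¹ : H) : G)⁻¹ = (h : G) * (x : G) := by
          push_cast
          simp
        rw [h2] at h1
        exact h1
      rw [hVx, map_sum, Finset.sum_mul]
      refine Finset.sum_congr rfl fun j _ => ?_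
      have e1 : (starRingEnd ℂ) ((ρ j).character (h * x)⁻¹) = (ρ j).character (h * x) := by
        rw [mychar_conj, inv_inv]
      have e2 : (starRingEnd ℂ) ((ρ i).character x) = (ρ i).character x⁻¹ := mychar_conj (ρ i) x
      rw [e1, e2, mul_comm]
    calc (Fintype.card H : ℂ)⁻¹ * ∑ x : H, (starRingEnd ℂ) (V.character ((h : G) * (x : G))) *
          (starRingEnd ℂ) ((ρ i).character x)
        = (Fintype.card H : ℂ)⁻¹ * ∑ j : Fin m, ∑ x : H,
            (ρ i).character x⁻¹ * (ρ j).character (h * x) := by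
          rw [Finset.sum_comm]
          congr 1
          exact Finset.sum_congr rfl fun x _ => inner x
      _ = (Fintype.card H : ℂ)⁻¹ * ∑ j : Fin m,
            (if Nonempty (ρ j ≅ ρ i) then (Fintype.card H : ℂ) / (finrank ℂ (ρ j)) else 0) *
              (ρ j).character h := by
          congr 1
          exact Finset.sum_congr rfl fun j _ => myconv (ρ j) (ρ i) h
      _ = (finrank ℂ (ρ i) : ℂ)⁻¹ * (ρ i).character h := by
          rw [Finset.sum_eq_single i]
          · have hne : Nonempty (ρ i ≅ ρ i) := ⟨Iso.refl _⟩
            rw [if_pos hne, div_eq_mul_inv, ← mul_assoc, ← mul_assoc,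
              inv_mul_cancel₀ hcard, one_mul]
          · intro j _ hji
            rw [if_neg (not_nonempty_iff.mpr (hpairwise j i hji)), zero_mul]
          · intro hi; exact absurd (Finset.mem_univ i) hi
  -- Step B: the linear relation on H
  have hB : ∀ h : H, ∑ i : Fin m, (c i * (finrank ℂ (ρ i) : ℂ)⁻¹) * (ρ i).character h
      = (finrank ℂ (ρ i0) : ℂ)⁻¹ * (ρ i0).character h := by
    intro h
    have h1 := hval h
    rw [hψ ((h : H) : G)] at h1
    calc ∑ i : Fin m, (c i * (finrank ℂ (ρ i) : ℂ)⁻¹) * (ρ i).character h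
        = ∑ i : Fin m, c i *
          ((Fintype.card H : ℂ)⁻¹ * ∑ x : H, (starRingEnd ℂ) (V.character ((h : G) * (x : G))) *
            (starRingEnd ℂ) ((ρ i).character x)) := by
          refine Finset.sum_congr rfl fun i _ => ?_
          rw [φval i h, mul_assoc]
      _ = (finrank ℂ (ρ i0) : ℂ)⁻¹ * (ρ i0).character h := h1
  -- orthogonality on H
  have orth : ∀ i k : Fin m, ∑ h : H, (ρ i).character h * (ρ k).character h⁻¹
      = (Fintype.card H : ℂ) * (if i = k then 1 else 0) := by
    intro i k
    have h := mychar_orth (ρ i) (ρ k)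
    rw [invOf_smul_eq_iff] at h
    rw [h, smul_eq_mul]
    congr 1
    by_cases hik : i = k
    · subst hik
      rw [if_pos ⟨Iso.refl _⟩, if_pos rfl]
    · rw [if_neg (not_nonempty_iff.mpr (hpairwise i k hik)), if_neg hik]
  -- Step C: extract coefficients
  have hc : ∀ k : Fin m, c k = if k = i0 then 1 else 0 := by
    intro k
    have h1 : ∑ h : H, (∑ i : Fin m, (c i * (finrank ℂ (ρ i) : ℂ)⁻¹) * (ρ i).character h)
        * (ρ k).character h⁻¹
        = ∑ h : H, ((finrank ℂ (ρ i0) : ℂ)⁻¹ * (ρ i0).character h) * (ρ k).character h⁻¹ :=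
      Finset.sum_congr rfl fun h _ => by rw [hB h]
    have h2 : ∑ h : H, (∑ i : Fin m, (c i * (finrank ℂ (ρ i) : ℂ)⁻¹) * (ρ i).character h)
        * (ρ k).character h⁻¹
        = (Fintype.card H : ℂ) * (c k * (finrank ℂ (ρ k) : ℂ)⁻¹) := by
      simp_rw [Finset.sum_mul]
      rw [Finset.sum_comm]
      calc ∑ i : Fin m, ∑ h : H, (c i * (finrank ℂ (ρ i) : ℂ)⁻¹) * (ρ i).character h
            * (ρ k).character h⁻¹
          = ∑ i : Fin m, (c i * (finrank ℂ (ρ i) : ℂ)⁻¹) *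
              ((Fintype.card H : ℂ) * (if i = k then 1 else 0)) := by
            refine Finset.sum_congr rfl fun i _ => ?_
            rw [← orth i k, Finset.mul_sum]
            exact Finset.sum_congr rfl fun h _ => by ring
        _ = (Fintype.card H : ℂ) * (c k * (finrank ℂ (ρ k) : ℂ)⁻¹) := by
            rw [Finset.sum_eq_single k]
            · rw [if_pos rfl, mul_one, mul_comm]
            · intro j _ hjk; rw [if_neg hjk, mul_zero, mul_zero]
            · intro hk; exact absurd (Finset.mem_univ k) hk
    have h3 : ∑ h : H, ((finrank ℂ (ρ i0) : ℂ)⁻¹ * (ρ i0).character h) * (ρ k).character h⁻¹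
        = (Fintype.card H : ℂ) * ((finrank ℂ (ρ i0) : ℂ)⁻¹ * (if i0 = k then 1 else 0)) := by
      calc ∑ h : H, ((finrank ℂ (ρ i0) : ℂ)⁻¹ * (ρ i0).character h) * (ρ k).character h⁻¹
          = (finrank ℂ (ρ i0) : ℂ)⁻¹ * ∑ h : H, (ρ i0).character h * (ρ k).character h⁻¹ := by
            rw [Finset.mul_sum]
            exact Finset.sum_congr rfl fun h _ => by ring
        _ = (Fintype.card H : ℂ) * ((finrank ℂ (ρ i0) : ℂ)⁻¹ * (if i0 = k then 1 else 0)) := by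
            rw [orth i0 k]; ring
    have h4 : c k * (finrank ℂ (ρ k) : ℂ)⁻¹
        = (finrank ℂ (ρ i0) : ℂ)⁻¹ * (if i0 = k then 1 else 0) :=
      mul_left_cancel₀ hcard (by rw [← h2, h1, h3])
    by_cases hk : k = i0
    · subst hk
      rw [if_pos rfl, mul_one] at h4
      rw [if_pos rfl]
      exact mul_right_cancel₀ (inv_ne_zero (myfinrank_pos (ρ i0))) (h4.trans (one_mul _).symm)
    · rw [if_neg hk]
      rw [if_neg (fun hh => hk hh.symm), mul_zero] at h4
      rcases mul_eq_zero.mp h4 with h | h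
      · exact h
      · exact absurd h (inv_ne_zero (myfinrank_pos (ρ k)))
  -- Step D: conclude
  intro g
  rw [hψ g, Finset.sum_eq_single i0]
  · rw [hc i0, if_pos rfl, one_mul]
  · intro j _ hj
    rw [hc j, if_neg hj, zero_mul]
  · intro hi; exact absurd (Finset.mem_univ i0) hi
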